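/- Let X be locally path connected, H-SLT at x₀, and homotopically Hausdorff relative to K, where K is a normal subgroup of π₁(X, x₀) containing H. Then the endpoint projection p_K : X̃_K^wh → X has the unique path lifting property. -/

import Mathlib

open Set TopologicalSpace unitInterval

universe u

namespace SLTF

attribute [local instance] Path.Homotopic.setoid

variable {X : Type u} [TopologicalSpace X]

/-- The homotopy class of a loop as an element of the fundamental group. -/
noncomputable def fl {x : X} (γ : Path x x) : FundamentalGroup X x :=
  @FundamentalGroup.fromPath X _ x ⟦γ⟧

/-- Multiplication of fundamental-group elements in path-concatenation order:
`pmul a b` is the class of "`a` followed by `b`". -/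
noncomputable def pmul {x : X} (a b : FundamentalGroup X x) : FundamentalGroup X x :=
  @FundamentalGroup.fromPath X _ x
    (Path.Homotopic.Quotient.trans (@FundamentalGroup.toPath X _ x a)
      (@FundamentalGroup.toPath X _ x b))

/-- A path in `X` starting at the base point `x`, recorded together with its end point. -/
structure PPath (X : Type u) [TopologicalSpace X] (x : X) where
  target : X
  path : Path x target

/-- Two paths starting at `x` are identified when they have the same end point and the
class of `α ⬝ β⁻¹` satisfies the predicate `P` (e.g. membership in a subgroup `H`). -/
def HRel (x : X) (P : Path x x → Prop) (α β : PPath X x) : Prop :=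
  ∃ h : α.target = β.target, P (α.path.trans ((β.path.cast rfl h).symm))

/-- The set `X̃` of `P`-equivalence classes of paths starting at `x`. -/
def Xtilde (x : X) (P : Path x x → Prop) : Type u := Quot (HRel x P)

/-- The class of a path in `X̃`. -/
def mkX (x : X) (P : Path x x → Prop) (α : PPath X x) : Xtilde x P := Quot.mk _ α

/-- The basic whisker-open set `([α], U)`: all classes of prolongations of `α` by a path in `U`. -/
def whBasic (x : X) (P : Path x x → Prop) (α : PPath X x) (U : Set X) : Set (Xtilde x P) :=
  { q | ∃ (y : X) (β : Path α.target y), range ⇑β ⊆ U ∧ q = mkX x P ⟨y, α.path.trans β⟩ }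

/-- The whisker topology on `X̃`, generated by the sets `([α], U)` for `U` an open
neighbourhood of the end point of `α`. -/
instance whTop (x : X) (P : Path x x → Prop) : TopologicalSpace (Xtilde x P) :=
  generateFrom
    { S | ∃ (α : PPath X x) (U : Set X), IsOpen U ∧ α.target ∈ U ∧ S = whBasic x P α U }

/-- The endpoint projection `p : X̃ → X`. -/
def endpt (x : X) (P : Path x x → Prop) : Xtilde x P → X :=
  Quot.lift (fun α => α.target) (fun _ _ h => h.elim fun e _ => e)

/-- The space of paths in `X` starting at `x`, with the compact-open topology. -/
def PSp (X : Type u) [TopologicalSpace X] (x : X) : Type u := { f : C(I, X) // f 0 = x }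

instance (x : X) : TopologicalSpace (PSp X x) := instTopologicalSpaceSubtype

/-- The natural surjection from the path space onto `X̃`. -/
def toXt (x : X) (P : Path x x → Prop) : PSp X x → Xtilde x P :=
  fun f => mkX x P ⟨f.1 1, ⟨f.1, f.2, rfl⟩⟩

/-- The quotient of the compact-open topology on `X̃`. -/
def topTop (x : X) (P : Path x x → Prop) : TopologicalSpace (Xtilde x P) :=
  coinduced (toXt x P) inferInstance

/-- Membership in a subgroup `H`, as a predicate on loops. -/
noncomputable def loopMem (x : X) (H : Subgroup (FundamentalGroup X x)) : Path x x → Prop :=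
  fun γ => fl γ ∈ H

/-- `X̃_H`, the classes of paths starting at `x₀` modulo `H`. -/
abbrev XtildeH (x₀ : X) (H : Subgroup (FundamentalGroup X x₀)) : Type u :=
  Xtilde x₀ (loopMem x₀ H)

/-- The fiber of the endpoint projection over `y`, with the subspace (whisker) topology. -/
abbrev Fib (x : X) (P : Path x x → Prop) (y : X) : Type u :=
  { q : Xtilde x P // endpt x P q = y }

/-- The class in the fiber over `y` of a path from `x` to `y`. -/
def mkFib (x : X) (P : Path x x → Prop) {y : X} (δ : Path x y) : Fib x P y :=
  ⟨mkX x P ⟨y, δ⟩, rfl⟩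

/-- The whisker topology on the fundamental group `π₁(X, x)`: basic neighbourhoods of `a`
are the sets `{a ⋆ [γ] : γ a loop in U at x}` for `U` an open neighbourhood of `x`. -/
noncomputable def whPi1 (x : X) : TopologicalSpace (FundamentalGroup X x) :=
  generateFrom
    { S | ∃ (a : FundamentalGroup X x) (U : Set X), IsOpen U ∧ x ∈ U ∧
        S = { b | ∃ γ : Path x x, range ⇑γ ⊆ U ∧ b = pmul a (fl γ) } }

/-- The quotient topology on `π₁(X, x)` induced from the loop space with the
compact-open topology. -/
noncomputable def qtopPi1 (x : X) : TopologicalSpace (FundamentalGroup X x) :=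
  coinduced (fun γ : Path x x => fl γ) inferInstance

/-- `X` is `H`-SLT at `x₀`. -/
noncomputable def IsHSLTAt (x₀ : X) (H : Subgroup (FundamentalGroup X x₀)) : Prop :=
  ∀ (y : X) (α : Path x₀ y) (U : Set X), IsOpen U → x₀ ∈ U →
    ∃ V : Set X, IsOpen V ∧ y ∈ V ∧
      ∀ β : Path y y, range ⇑β ⊆ V →
        ∃ γ : Path x₀ x₀, range ⇑γ ⊆ U ∧
          fl ((α.trans (β.trans α.symm)).trans γ.symm) ∈ H

/-- `X` is SLT at `x`. -/
def IsSLTAt (X : Type u) [TopologicalSpace X] (x : X) : Prop :=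
  ∀ (y : X) (α : Path x y) (U : Set X), IsOpen U → x ∈ U →
    ∃ V : Set X, IsOpen V ∧ y ∈ V ∧
      ∀ β : Path y y, range ⇑β ⊆ V →
        ∃ γ : Path x x, range ⇑γ ⊆ U ∧ (α.trans (β.trans α.symm)).Homotopic γ

/-- `X` is an SLT space. -/
def IsSLT (X : Type u) [TopologicalSpace X] : Prop := ∀ x : X, IsSLTAt X x

/-- `α` (a path from `x` to `y`) is an `H`-SLT path: for every path `lam` from `x₀` to `x`
and open `U ∋ x` there is an open `V ∋ y` such that every loop `β` in `V` at `y` transfers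
to a loop `γ` in `U` at `x` with `[α ⋆ β ⋆ α⁻¹ ⋆ γ⁻¹] ∈ [lam⁻¹ H lam]`, i.e.
`[lam ⋆ (α ⋆ β ⋆ α⁻¹ ⋆ γ⁻¹) ⋆ lam⁻¹] ∈ H`. -/
noncomputable def IsHSLTPath (x₀ : X) (H : Subgroup (FundamentalGroup X x₀)) {x y : X}
    (α : Path x y) : Prop :=
  ∀ (lam : Path x₀ x) (U : Set X), IsOpen U → x ∈ U →
    ∃ V : Set X, IsOpen V ∧ y ∈ V ∧
      ∀ β : Path y y, range ⇑β ⊆ V →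
        ∃ γ : Path x x, range ⇑γ ⊆ U ∧
          fl (lam.trans ((((α.trans (β.trans α.symm)).trans γ.symm)).trans lam.symm)) ∈ H

/-- `X` is an `H`-SLT space: for every `x` and every path `lam` from `x₀` to `x`, `X` is
`[lam⁻¹ H lam]`-SLT at `x`. -/
noncomputable def IsHSLTSpace (x₀ : X) (H : Subgroup (FundamentalGroup X x₀)) : Prop :=
  ∀ (x y : X) (α : Path x y), IsHSLTPath x₀ H α

/-- Membership in the conjugate subgroup `[lam⁻¹ H lam]` of `π₁(X, x)`,
as a predicate on loops at `x`. -/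
noncomputable def conjMem (x₀ : X) (H : Subgroup (FundamentalGroup X x₀)) {x : X}
    (lam : Path x₀ x) : Path x x → Prop :=
  fun δ => fl (lam.trans (δ.trans lam.symm)) ∈ H

/-- `X` is homotopically Hausdorff relative to `H`. -/
noncomputable def HomHausdorffRel (x₀ : X) (H : Subgroup (FundamentalGroup X x₀)) : Prop :=
  ∀ (y : X) (α : Path x₀ y) (g : FundamentalGroup X x₀), g ∉ H →
    ∃ U : Set X, IsOpen U ∧ y ∈ U ∧
      ∀ γ : Path y y, range ⇑γ ⊆ U →
        ¬ ∃ h ∈ H, fl (α.trans (γ.trans α.symm)) = pmul h g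

/-- `X` is homotopically path Hausdorff relative to `H`. -/
noncomputable def HomPathHausdorffRel (x₀ : X) (H : Subgroup (FundamentalGroup X x₀)) : Prop :=
  ∀ (y : X) (α β : Path x₀ y), fl (α.trans β.symm) ∉ H →
    ∃ (n : ℕ) (t : Fin (n + 1) → I) (U : Fin n → Set X),
      t 0 = 0 ∧ t (Fin.last n) = 1 ∧ StrictMono t ∧
      (∀ i : Fin n, IsOpen (U i)) ∧
      (∀ i : Fin n, ⇑α '' Set.Icc (t i.castSucc) (t i.succ) ⊆ U i) ∧
      ∀ γ : Path x₀ y,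
        (∀ i : Fin n, ⇑γ '' Set.Icc (t i.castSucc) (t i.succ) ⊆ U i) →
        (∀ i : Fin (n + 1), γ (t i) = α (t i)) →
        fl (γ.trans β.symm) ∉ H

/-- The endpoint projection `p : X̃ → X` (with the whisker topology on `X̃`) has the
unique path lifting property. -/
def UPLP (x : X) (P : Path x x → Prop) : Prop :=
  ∀ g₁ g₂ : C(I, Xtilde x P), g₁ 0 = g₂ 0 →
    (∀ t, endpt x P (g₁ t) = endpt x P (g₂ t)) → g₁ = g₂

/-- A semicovering map: a local homeomorphism with (continuous) unique lifting of paths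
and of homotopies. -/
structure IsSemicovering {Y : Type u} [TopologicalSpace Y] (p : Y → X) : Prop where
  localHomeo : IsLocalHomeomorph p
  pathLift : ∀ (y : Y) (γ : C(I, X)), γ 0 = p y →
    ∃! γh : C(I, Y), γh 0 = y ∧ ∀ t, p (γh t) = γ t
  contPathLift : ∀ y : Y, ∃ L : { γ : C(I, X) // γ 0 = p y } → C(I, Y),
    Continuous L ∧ ∀ γ, (L γ) 0 = y ∧ ∀ t, p ((L γ) t) = (γ : C(I, X)) t
  homotopyLift : ∀ (y : Y) (Φ : C(I × I, X)), Φ (0, 0) = p y →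
    ∃! Φh : C(I × I, Y), Φh (0, 0) = y ∧ ∀ z, p (Φh z) = Φ z
  contHomotopyLift : ∀ y : Y, ∃ L : { Φ : C(I × I, X) // Φ (0, 0) = p y } → C(I × I, Y),
    Continuous L ∧ ∀ Φ, (L Φ) (0, 0) = y ∧ ∀ z, p ((L Φ) z) = (Φ : C(I × I, X)) z

/-- An `lpc₀`-covering map with `p₊π₁(Y, ·) = H`: a map which is equivalent, as a map
over `X`, to the endpoint projection `p_H : X̃_H → X` having the unique path lifting
property (with `Y` path connected and locally path connected). -/
structure IsLpc0Covering {Y : Type u} [TopologicalSpace Y] (p : Y → X) (x₀ : X)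
    (H : Subgroup (FundamentalGroup X x₀)) : Prop where
  pathConnected : PathConnectedSpace Y
  locPathConnected : LocPathConnectedSpace Y
  uplp : UPLP x₀ (loopMem x₀ H)
  equiv : ∃ φ : Y ≃ₜ XtildeH x₀ H, ∀ y, endpt x₀ (loopMem x₀ H) (φ y) = p y

/-- The homomorphism induced by `p` on fundamental groups, as a function. -/
noncomputable def pStar {Y : Type u} [TopologicalSpace Y] (p : C(Y, X)) (y₀ : Y) :
    FundamentalGroup Y y₀ → FundamentalGroup X (p y₀) :=
  fun g => @FundamentalGroup.fromPath X _ (p y₀)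
    (Path.Homotopic.Quotient.map (@FundamentalGroup.toPath Y _ y₀ g) p)


/-! ### Auxiliary machinery for Statement 7 -/

section Aux

open CategoryTheory

/-- Path-homotopy classes, as the raw quotient type. -/
abbrev HQ (x y : X) : Type u := _root_.Quotient (Path.Homotopic.setoid x y)

variable {x₀ : X}

/-- Composition of path-homotopy classes. -/
noncomputable def Qc {x y z : X} (a : HQ x y)
    (b : HQ y z) : HQ x z :=
  Path.Homotopic.Quotient.trans a b

lemma Qc_lift {x y z : X} (p : Path x y) (q : Path y z) :
    (⟦p.trans q⟧ : HQ x z) = Qc ⟦p⟧ ⟦q⟧ :=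
  rfl

lemma Qc_assoc {w x y z : X} (a : HQ w x)
    (b : HQ x y) (c : HQ y z) :
    Qc (Qc a b) c = Qc a (Qc b c) := by
  induction a using Quotient.inductionOn
  induction b using Quotient.inductionOn
  induction c using Quotient.inductionOn
  rename_i p q r
  show ⟦(p.trans q).trans r⟧ = ⟦p.trans (q.trans r)⟧
  exact Quotient.sound ⟨Path.Homotopy.transAssoc p q r⟩

lemma Qc_refl_l {x y : X} (a : HQ x y) :
    Qc ⟦Path.refl x⟧ a = a := by
  induction a using Quotient.inductionOn
  rename_i p
  exact Quotient.sound ⟨Path.Homotopy.reflTrans p⟩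

lemma Qc_refl_r {x y : X} (a : HQ x y) :
    Qc a ⟦Path.refl y⟧ = a := by
  induction a using Quotient.inductionOn
  rename_i p
  exact Quotient.sound ⟨Path.Homotopy.transRefl p⟩

lemma Qc_symm_l {x y : X} (p : Path x y) :
    Qc ⟦p.symm⟧ ⟦p⟧ = ⟦Path.refl y⟧ :=
  Quotient.sound ⟨(Path.Homotopy.reflSymmTrans p).symm⟩

lemma Qc_symm_r {x y : X} (p : Path x y) :
    Qc ⟦p⟧ ⟦p.symm⟧ = ⟦Path.refl x⟧ :=
  Quotient.sound ⟨(Path.Homotopy.reflTransSymm p).symm⟩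

lemma Qc_cancel_l {x y z : X} (p : Path x y) (c : HQ y z) :
    Qc ⟦p.symm⟧ (Qc ⟦p⟧ c) = c := by
  rw [← Qc_assoc, Qc_symm_l, Qc_refl_l]

lemma Qc_cancel_l' {x y z : X} (p : Path x y) (c : HQ x z) :
    Qc ⟦p⟧ (Qc ⟦p.symm⟧ c) = c := by
  rw [← Qc_assoc, Qc_symm_r, Qc_refl_l]

lemma Qc_symm_trans {x y z : X} (p : Path x y) (q : Path y z) :
    (⟦(p.trans q).symm⟧ : HQ z x) = Qc ⟦q.symm⟧ ⟦p.symm⟧ := by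
  have h : Qc (⟦(p.trans q).symm⟧ : HQ z x) ⟦p.trans q⟧
      = Qc (Qc ⟦q.symm⟧ ⟦p.symm⟧) ⟦p.trans q⟧ := by
    rw [Qc_symm_l, Qc_lift, Qc_assoc, Qc_cancel_l, Qc_symm_l]
  have h2 := congrArg (fun w => Qc w ⟦(p.trans q).symm⟧) h
  simpa only [Qc_assoc, Qc_symm_r, Qc_refl_r] using h2

lemma Qc_symm_symm {x y : X} (p : Path x y) :
    (⟦p.symm.symm⟧ : HQ x y) = ⟦p⟧ := by rw [Path.symm_symm]

lemma q_symm_refl {x : X} :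
    (⟦(Path.refl x).symm⟧ : HQ x x) = ⟦Path.refl x⟧ := by
  rw [Path.refl_symm]

/-- Homotopy invariance of `fl`. -/
lemma flh {γ γ' : Path x₀ x₀} (h : γ.Homotopic γ') : fl γ = fl γ' :=
  congrArg (@FundamentalGroup.fromPath X _ x₀) (Quotient.sound h)

lemma fl_refl : fl (Path.refl x₀) = (1 : FundamentalGroup X x₀) := rfl

lemma pmul_eq (a b : FundamentalGroup X x₀) : pmul a b = b * a := rfl

lemma fl_trans' (c d : Path x₀ x₀) : fl (c.trans d) = fl d * fl c := by
  show (⟦c.trans d⟧ : HQ x₀ x₀) = Qc ⟦c⟧ ⟦d⟧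
  simp only [Qc_lift]

lemma fl_symm_mul (c : Path x₀ x₀) : fl c.symm * fl c = 1 := by
  show Qc (⟦c⟧ : HQ x₀ x₀) ⟦c.symm⟧ = ⟦Path.refl x₀⟧
  simp only [Qc_symm_r]

lemma fl_symm (c : Path x₀ x₀) : fl c.symm = (fl c)⁻¹ :=
  eq_inv_of_mul_eq_one_left (fl_symm_mul c)

/-- Three-point splitting. -/
lemma ee_split {y : X} (p q r : Path x₀ y) :
    fl (p.trans r.symm) = fl (q.trans r.symm) * fl (p.trans q.symm) := by
  show (⟦p.trans r.symm⟧ : HQ x₀ x₀)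
    = Qc ⟦p.trans q.symm⟧ ⟦q.trans r.symm⟧
  simp only [Qc_lift, Qc_assoc, Qc_cancel_l, Qc_cancel_l', Qc_symm_l, Qc_symm_r, Qc_refl_l, Qc_refl_r]

lemma ee_self {y : X} (p : Path x₀ y) : fl (p.trans p.symm) = 1 := by
  show (⟦p.trans p.symm⟧ : HQ x₀ x₀) = ⟦Path.refl x₀⟧
  simp only [Qc_lift, Qc_symm_r]

lemma ee_whisker {y y' : X} (p q : Path x₀ y) (β : Path y y') :
    fl ((p.trans β).trans (q.trans β).symm) = fl (p.trans q.symm) := by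
  show (⟦(p.trans β).trans (q.trans β).symm⟧ : HQ x₀ x₀)
    = ⟦p.trans q.symm⟧
  simp only [Qc_lift, Qc_symm_trans, Qc_assoc, Qc_cancel_l, Qc_cancel_l', Qc_symm_l, Qc_symm_r,
    Qc_refl_l, Qc_refl_r]

lemma ee_conj {y y' : X} (p : Path x₀ y) (β β' : Path y y') :
    fl ((p.trans β).trans (p.trans β').symm)
      = fl (p.trans ((β.trans β'.symm).trans p.symm)) := by
  show (⟦(p.trans β).trans (p.trans β').symm⟧ : HQ x₀ x₀)
    = ⟦p.trans ((β.trans β'.symm).trans p.symm)⟧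
  simp only [Qc_lift, Qc_symm_trans, Qc_assoc, Qc_cancel_l, Qc_cancel_l', Qc_symm_l, Qc_symm_r,
    Qc_refl_l, Qc_refl_r]

lemma fl_loop_split (u c : Path x₀ x₀) : fl u = fl c * fl (u.trans c.symm) := by
  show (⟦u⟧ : HQ x₀ x₀) = Qc ⟦u.trans c.symm⟧ ⟦c⟧
  simp only [Qc_lift, Qc_assoc, Qc_cancel_l, Qc_cancel_l', Qc_symm_l, Qc_symm_r, Qc_refl_l, Qc_refl_r]

lemma fl_reflconj (c : Path x₀ x₀) :
    fl ((Path.refl x₀).trans (c.trans (Path.refl x₀).symm)) = fl c := by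
  show (⟦(Path.refl x₀).trans (c.trans (Path.refl x₀).symm)⟧ : HQ x₀ x₀)
    = ⟦c⟧
  simp only [Qc_lift, Qc_assoc, Qc_symm_l, Qc_symm_r, Qc_refl_l, Qc_refl_r, q_symm_refl]

lemma cast_rfl {y : X} (p : Path x₀ y) : p.cast rfl rfl = p :=
  Path.ext (by rw [Path.cast_coe])

lemma eeh {y : X} {p p' : Path x₀ y} (q : Path x₀ y) (h : p.Homotopic p') :
    fl (p.trans q.symm) = fl (p'.trans q.symm) :=
  flh (Path.Homotopic.hcomp h (Path.Homotopic.refl q.symm))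

lemma mk_cast (P : Path x₀ x₀ → Prop) {y z : X} (p : Path x₀ z) (h : y = z) :
    mkX x₀ P ⟨y, p.cast rfl h⟩ = mkX x₀ P ⟨z, p⟩ := by
  subst h; rw [cast_rfl]

variable (K : Subgroup (FundamentalGroup X x₀))

lemma hrel_same_target {y : X} (p q : Path x₀ y) :
    HRel x₀ (loopMem x₀ K) ⟨y, p⟩ ⟨y, q⟩ ↔ fl (p.trans q.symm) ∈ K := by
  constructor
  · rintro ⟨h, hP⟩
    rw [cast_rfl] at hP
    exact hP
  · intro h
    exact ⟨rfl, by rw [cast_rfl]; exact h⟩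

lemma hrel_equiv : Equivalence (HRel x₀ (loopMem x₀ K)) := by
  constructor
  · rintro ⟨ta, pa⟩
    refine ⟨rfl, ?_⟩
    rw [cast_rfl]
    show fl (pa.trans pa.symm) ∈ K
    rw [ee_self]; exact K.one_mem
  · rintro ⟨ta, pa⟩ ⟨tb, pb⟩ ⟨h, hP⟩
    dsimp only at h
    subst h
    rw [cast_rfl] at hP
    refine ⟨rfl, ?_⟩
    rw [cast_rfl]
    have h1 : fl (pa.trans pb.symm) * fl (pb.trans pa.symm) = 1 := by
      rw [← ee_split pb pa pb, ee_self]
    show fl (pb.trans pa.symm) ∈ K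
    rw [eq_inv_of_mul_eq_one_right h1]
    exact K.inv_mem hP
  · rintro ⟨ta, pa⟩ ⟨tb, pb⟩ ⟨tc, pc⟩ ⟨h1, hP1⟩ ⟨h2, hP2⟩
    dsimp only at h1 h2
    subst h1; subst h2
    rw [cast_rfl] at hP1 hP2
    refine ⟨rfl, ?_⟩
    rw [cast_rfl]
    show fl (pa.trans pc.symm) ∈ K
    rw [ee_split pa pb pc]
    exact K.mul_mem hP2 hP1

lemma mk_eq_iff {y : X} (p q : Path x₀ y) :
    mkX x₀ (loopMem x₀ K) ⟨y, p⟩ = mkX x₀ (loopMem x₀ K) ⟨y, q⟩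
      ↔ fl (p.trans q.symm) ∈ K := by
  rw [mkX, mkX]
  exact Quot.eq.trans ((hrel_equiv K).eqvGen_iff.trans (hrel_same_target K p q))

lemma whBasic_isOpen (P : Path x₀ x₀ → Prop) (α : PPath X x₀) {U : Set X}
    (hU : IsOpen U) (hα : α.target ∈ U) : IsOpen (whBasic x₀ P α U) :=
  isOpen_generateFrom_of_mem ⟨α, U, hU, hα, rfl⟩

lemma mem_whBasic_self {y : X} (p : Path x₀ y) {U : Set X} (hU : y ∈ U) :
    mkX x₀ (loopMem x₀ K) ⟨y, p⟩ ∈ whBasic x₀ (loopMem x₀ K) ⟨y, p⟩ U := by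
  refine ⟨y, Path.refl y, ?_, ?_⟩
  · rw [Path.refl_range]; exact singleton_subset_iff.2 hU
  · refine ((mk_eq_iff K (p.trans (Path.refl y)) p).2 ?_).symm
    rw [eeh p ⟨Path.Homotopy.transRefl p⟩, ee_self]
    exact K.one_mem

end Aux

/-- Let `X` be locally path connected, `H`-SLT at `x₀`, and homotopically
Hausdorff relative to `K`, where `K` is a normal subgroup of `π₁(X, x₀)` containing `H`.
Then the endpoint projection `p_K : X̃_K^wh → X` has the unique path lifting property. -/
theorem statement7 {X : Type u} [TopologicalSpace X] [PathConnectedSpace X]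
    [LocallyPathConnectedSpace X] (x₀ : X)
    (H K : Subgroup (FundamentalGroup X x₀)) (hK : K.Normal) (hHK : H ≤ K)
    (hslt : IsHSLTAt x₀ H) (hhh : HomHausdorffRel x₀ K) :
    UPLP x₀ (loopMem x₀ K) := by
  classical
  intro g₁ g₂ h0 hend
  by_contra hne
  have hex : ∃ T : I, g₁ T ≠ g₂ T := by
    by_contra hc
    push_neg at hc
    exact hne (ContinuousMap.ext hc)
  obtain ⟨T, hT⟩ := hex
  choose R hR using fun q : Xtilde x₀ (loopMem x₀ K) => Quot.exists_rep q
  let f : I → X := fun t => endpt x₀ (loopMem x₀ K) (g₁ t)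
  have hfa : ∀ t, f t = (R (g₁ t)).target := fun t =>
    (congrArg (endpt x₀ (loopMem x₀ K)) (hR (g₁ t))).symm
  have hfb : ∀ t, f t = (R (g₂ t)).target := fun t => by
    have h1 : f t = endpt x₀ (loopMem x₀ K) (g₂ t) := hend t
    rw [h1]
    exact (congrArg (endpt x₀ (loopMem x₀ K)) (hR (g₂ t))).symm
  let a : ∀ t : I, Path x₀ (f t) := fun t => (R (g₁ t)).path.cast rfl (hfa t)
  let b : ∀ t : I, Path x₀ (f t) := fun t => (R (g₂ t)).path.cast rfl (hfb t)
  have ha : ∀ t, mkX x₀ (loopMem x₀ K) ⟨f t, a t⟩ = g₁ t := fun t =>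
    (mk_cast _ (R (g₁ t)).path (hfa t)).trans (hR (g₁ t))
  have hb : ∀ t, mkX x₀ (loopMem x₀ K) ⟨f t, b t⟩ = g₂ t := fun t =>
    (mk_cast _ (R (g₂ t)).path (hfb t)).trans (hR (g₂ t))
  let e : I → FundamentalGroup X x₀ := fun t => fl ((a t).trans (b t).symm)
  have key : ∀ t, g₁ t = g₂ t ↔ e t ∈ K := fun t => by
    rw [← ha t, ← hb t]
    exact mk_eq_iff K (a t) (b t)
  have hgK : e T ∉ K := fun h => hT ((key T).2 h)
  obtain ⟨W, hWo, hWx, hW⟩ := hhh x₀ (Path.refl x₀) (e T) hgK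
  have hW' : ∀ c : Path x₀ x₀, range ⇑c ⊆ W → ∀ k, k ∈ K → fl c ≠ e T * k := by
    intro c hc k hk hEq
    exact hW c hc ⟨k, hk, by rw [fl_reflconj, hEq, pmul_eq]⟩
  let S : Set I :=
    {t | ∃ c : Path x₀ x₀, range ⇑c ⊆ W ∧ ∃ k₁ ∈ K, ∃ k₂ ∈ K, e t = k₁ * fl c * k₂}
  -- the local transfer lemma
  have loc : ∀ t : I, ∃ N : Set I, IsOpen N ∧ t ∈ N ∧ ∀ s ∈ N,
      ∃ c : Path x₀ x₀, range ⇑c ⊆ W ∧ ∃ k₁ ∈ K, ∃ k₂ ∈ K,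
        e s = k₁ * (e t * fl c) * k₂ := by
    intro t
    obtain ⟨V, hVo, hVt, hV⟩ := hslt (f t) (a t) W hWo hWx
    refine ⟨g₁ ⁻¹' (whBasic x₀ (loopMem x₀ K) ⟨f t, a t⟩ V)
        ∩ g₂ ⁻¹' (whBasic x₀ (loopMem x₀ K) ⟨f t, b t⟩ V), ?_, ?_, ?_⟩
    · exact ((whBasic_isOpen _ _ hVo hVt).preimage g₁.continuous).inter
        ((whBasic_isOpen _ _ hVo hVt).preimage g₂.continuous)
    · exact ⟨mem_preimage.2 (by rw [← ha t]; exact mem_whBasic_self K (a t) hVt),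
        mem_preimage.2 (by rw [← hb t]; exact mem_whBasic_self K (b t) hVt)⟩
    · intro s hs
      obtain ⟨y₁, β, hβ, h1⟩ := hs.1
      obtain ⟨y₂, β', hβ', h2⟩ := hs.2
      have hy₁ : y₁ = f s := (congrArg (endpt x₀ (loopMem x₀ K)) h1).symm
      subst hy₁
      have hy₂ : y₂ = f s := by
        have h3 : endpt x₀ (loopMem x₀ K) (g₂ s) = y₂ :=
          congrArg (endpt x₀ (loopMem x₀ K)) h2
        exact h3.symm.trans (hend s).symm
      subst hy₂
      have hk1 : fl ((a s).trans ((a t).trans β).symm) ∈ K :=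
        (mk_eq_iff K (a s) ((a t).trans β)).1 ((ha s).trans h1)
      have hk2 : fl ((b s).trans ((b t).trans β').symm) ∈ K :=
        (mk_eq_iff K (b s) ((b t).trans β')).1 ((hb s).trans h2)
      obtain ⟨c, hcW, hH⟩ := hV (β.trans β'.symm) (by
        rw [Path.trans_range, Path.symm_range]
        exact union_subset hβ hβ')
      refine ⟨c, hcW, fl (((b t).trans β').trans (b s).symm), ?_,
        fl (((a t).trans ((β.trans β'.symm).trans (a t).symm)).trans c.symm)
          * fl ((a s).trans ((a t).trans β).symm), ?_, ?_⟩
      · have h3 : fl (((b t).trans β').trans ((b t).trans β').symm)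
            = fl ((b s).trans ((b t).trans β').symm)
              * fl (((b t).trans β').trans (b s).symm) := ee_split _ _ _
        rw [ee_self] at h3
        rw [eq_inv_of_mul_eq_one_right h3.symm]
        exact K.inv_mem hk2
      · exact K.mul_mem (hHK hH) hk1
      · have E1 : e s = fl (((a t).trans β).trans (b s).symm)
            * fl ((a s).trans ((a t).trans β).symm) := ee_split _ _ _
        have E2 : fl (((a t).trans β).trans (b s).symm)
            = fl (((b t).trans β').trans (b s).symm)
              * fl (((a t).trans β).trans ((b t).trans β').symm) := ee_split _ _ _
        have E4 : fl (((a t).trans β).trans ((b t).trans β').symm)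
            = fl (((a t).trans β').trans ((b t).trans β').symm)
              * fl (((a t).trans β).trans ((a t).trans β').symm) := ee_split _ _ _
        rw [ee_whisker, ee_conj] at E4
        have E5 : fl ((a t).trans ((β.trans β'.symm).trans (a t).symm))
            = fl c * fl (((a t).trans ((β.trans β'.symm).trans (a t).symm)).trans c.symm) :=
          fl_loop_split _ c
        rw [E1, E2, E4, E5]
        show _ = _ * (fl ((a t).trans (b t).symm) * fl c) * _
        group
  -- `S` is open
  have hSopen : IsOpen S := by
    rw [isOpen_iff_forall_mem_open]
    intro t ht
    obtain ⟨N, hNo, hNt, hN⟩ := loc t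
    refine ⟨N, ?_, hNo, hNt⟩
    intro s hsN
    obtain ⟨d, hdW, κ₁, hκ₁, κ₂, hκ₂, hEt⟩ := ht
    obtain ⟨c, hcW, k₁, hk₁, k₂, hk₂, hEs⟩ := hN s hsN
    refine ⟨c.trans d, ?_, k₁ * κ₁, K.mul_mem hk₁ hκ₁,
      ((fl c)⁻¹ * κ₂ * fl c) * k₂, K.mul_mem ?_ hk₂, ?_⟩
    · rw [Path.trans_range]; exact union_subset hcW hdW
    · have h3 := hK.conj_mem κ₂ hκ₂ (fl c)⁻¹
      rwa [inv_inv] at h3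
    · rw [fl_trans', hEs, hEt]
      group
  -- the complement of `S` is open
  have hSc : IsOpen Sᶜ := by
    rw [isOpen_iff_forall_mem_open]
    intro t ht
    obtain ⟨N, hNo, hNt, hN⟩ := loc t
    refine ⟨N, ?_, hNo, hNt⟩
    intro s hsN hsS
    apply ht
    obtain ⟨c, hcW, k₁, hk₁, k₂, hk₂, hEs⟩ := hN s hsN
    obtain ⟨d, hdW, κ₁, hκ₁, κ₂, hκ₂, hEt⟩ := hsS
    have hEq2 : k₁ * (e t * fl c) * k₂ = κ₁ * fl d * κ₂ := hEs.symm.trans hEt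
    refine ⟨c.symm.trans d, ?_, k₁⁻¹ * κ₁, K.mul_mem (K.inv_mem hk₁) hκ₁,
      fl c * (κ₂ * k₂⁻¹) * (fl c)⁻¹, hK.conj_mem _ (K.mul_mem hκ₂ (K.inv_mem hk₂)) _, ?_⟩
    · rw [Path.trans_range, Path.symm_range]; exact union_subset hcW hdW
    · rw [fl_trans', fl_symm]
      calc e t = k₁⁻¹ * (k₁ * (e t * fl c) * k₂) * k₂⁻¹ * (fl c)⁻¹ := by group
        _ = k₁⁻¹ * (κ₁ * fl d * κ₂) * k₂⁻¹ * (fl c)⁻¹ := by rw [hEq2]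
        _ = k₁⁻¹ * κ₁ * (fl d * (fl c)⁻¹) * (fl c * (κ₂ * k₂⁻¹) * (fl c)⁻¹) := by group
  -- `0 ∈ S`
  have h0S : (0 : I) ∈ S := by
    refine ⟨Path.refl x₀, by rw [Path.refl_range]; exact singleton_subset_iff.2 hWx,
      e 0, (key 0).1 h0, 1, K.one_mem, ?_⟩
    rw [fl_refl]; group
  -- conclude by connectedness
  haveI : PreconnectedSpace I := Subtype.preconnectedSpace isPreconnected_Icc
  have hSuniv : S = univ := IsClopen.eq_univ ⟨isOpen_compl_iff.1 hSc, hSopen⟩ ⟨0, h0S⟩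
  have hTS : T ∈ S := hSuniv ▸ mem_univ T
  obtain ⟨c, hcW, k₁, hk₁, k₂, hk₂, hEq⟩ := hTS
  refine hW' c hcW ((e T)⁻¹ * k₁⁻¹ * e T * k₂⁻¹) ?_ ?_
  · refine K.mul_mem ?_ (K.inv_mem hk₂)
    have h3 := hK.conj_mem k₁⁻¹ (K.inv_mem hk₁) (e T)⁻¹
    rwa [inv_inv] at h3
  · rw [hEq]; group

end SLTF
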